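/- Let d ≥ 1, μ > 1, and let V ∈ C¹(ℝ^d; ℝ) satisfy |V(x)| ≤ C(1+|x|)^{-μ} and |∇V(x)| ≤ C(1+|x|)^{-μ-1} for all x. Let q, p : ℝ → ℝ^d be C¹ and solve q'(t) = p(t), p'(t) = −∇V(q(t)); let q⁻, p⁻ ∈ ℝ^d with p⁻ ≠ 0 be such that |q(t) − t p⁻ − q⁻| → 0 and |p(t) − p⁻| → 0 as t → −∞. Let S(t) = ∫₀^t ( (1/2)|p(s)|² − V(q(s)) ) ds and assume S(t) − t|p⁻|²/2 → 0 as t → −∞. Then δ(t) := S(t) − ( q(t)·p(t) − q⁻·p⁻ )/2 → 0 as t → −∞. -/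

import Mathlib

set_option maxHeartbeats 1000000

/-- Classical scattering phase correction: along a classical trajectory `(q,p)` with
asymptotic data `(q⁻, p⁻)` at `t → -∞` for a short-range potential, if the action
`S(t) - t|p⁻|²/2` converges to `0`, then
`δ(t) = S(t) - (q(t)·p(t) - q⁻·p⁻)/2 → 0` as `t → -∞`. -/
theorem stmt_14 (d : ℕ) (hd : 1 ≤ d) (μ C : ℝ) (hμ : 1 < μ) (hC : 0 < C)
    (V : EuclideanSpace ℝ (Fin d) → ℝ) (hV : ContDiff ℝ 1 V)
    (hVb : ∀ x, |V x| ≤ C * (1 + ‖x‖) ^ (-μ))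
    (hV1 : ∀ x, ‖gradient V x‖ ≤ C * (1 + ‖x‖) ^ (-μ - 1))
    (q p : ℝ → EuclideanSpace ℝ (Fin d))
    (hq : ∀ t, HasDerivAt q (p t) t)
    (hp : ∀ t, HasDerivAt p (-(gradient V (q t))) t)
    (qm pm : EuclideanSpace ℝ (Fin d)) (hpm : pm ≠ 0)
    (hq_asym : Filter.Tendsto (fun t : ℝ => ‖q t - t • pm - qm‖) Filter.atBot (nhds 0))
    (hp_asym : Filter.Tendsto (fun t : ℝ => ‖p t - pm‖) Filter.atBot (nhds 0))
    (S : ℝ → ℝ)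
    (hS : ∀ t, S t = ∫ s in (0:ℝ)..t, ((1/2) * ‖p s‖ ^ 2 - V (q s)))
    (hS_asym : Filter.Tendsto (fun t : ℝ => S t - t * ‖pm‖ ^ 2 / 2)
      Filter.atBot (nhds 0)) :
    Filter.Tendsto
      (fun t : ℝ => S t - ((inner ℝ (q t) (p t) : ℝ) - (inner ℝ qm pm : ℝ)) / 2)
      Filter.atBot (nhds 0) := by
  have hpm' : (0:ℝ) < ‖pm‖ := norm_pos_iff.mpr hpm
  set a : ℝ := ‖pm‖ / 2 with ha_def
  have ha : 0 < a := by positivity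
  have hμ0 : 0 < μ := by linarith
  -- p tends to pm
  have hpt : Filter.Tendsto p Filter.atBot (nhds pm) :=
    tendsto_iff_norm_sub_tendsto_zero.mpr hp_asym
  -- continuity of the force along the trajectory
  have hqc : Continuous q := continuous_iff_continuousAt.mpr fun t => (hq t).continuousAt
  have hgradc : Continuous fun x => gradient V x := by
    have h1 : Continuous (fderiv ℝ V) := hV.continuous_fderiv one_ne_zero
    exact (InnerProductSpace.toDual ℝ (EuclideanSpace ℝ (Fin d))).symm.continuous.comp h1
  have hgc : Continuous fun s => -(gradient V (q s)) := (hgradc.comp hqc).neg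
  -- Step A : lower bound on the trajectory
  have hA : ∀ᶠ t in Filter.atBot, 1 - a * t ≤ 1 + ‖q t‖ ∧ t < 0 := by
    have h1 : ∀ᶠ t in Filter.atBot, ‖q t - t • pm - qm‖ < 1 :=
      hq_asym.eventually (gt_mem_nhds (by norm_num : (0:ℝ) < 1))
    have h2 : ∀ᶠ t in Filter.atBot, t ≤ -((‖qm‖ + 1) / a) := Filter.eventually_le_atBot _
    have h3 : ∀ᶠ t : ℝ in Filter.atBot, t < 0 := Filter.eventually_lt_atBot (0:ℝ)
    filter_upwards [h1, h2, h3] with t h1 h2 h3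
    refine ⟨?_, h3⟩
    have htri : ‖t • pm‖ ≤ ‖q t‖ + ‖q t - t • pm - qm‖ + ‖qm‖ := by
      have heq : t • pm = q t - (q t - t • pm - qm) - qm := by abel
      have h' := norm_sub_le (q t - (q t - t • pm - qm)) qm
      have h'' := norm_sub_le (q t) (q t - t • pm - qm)
      have h0 : ‖t • pm‖ = ‖q t - (q t - t • pm - qm) - qm‖ := congrArg norm heq
      linarith
    have hsn : ‖t • pm‖ = (-t) * (2 * a) := by
      rw [norm_smul, Real.norm_eq_abs, abs_of_neg h3, ha_def]; ring
    have h2' : ‖qm‖ + 1 ≤ a * (-t) := by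
      have hx : (‖qm‖ + 1) / a ≤ -t := by linarith
      rw [div_le_iff₀ ha] at hx
      linarith
    nlinarith
  obtain ⟨T, hT⟩ := Filter.eventually_atBot.mp hA
  have hT0 : T < 0 := (hT T le_rfl).2
  -- Step B/C : quantitative bound ‖p u - pm‖ ≤ K (1 - a u)^(-μ) for u ≤ T
  set K : ℝ := C / (a * μ) with hK_def
  have hK : 0 < K := by positivity
  have hbase : ∀ s : ℝ, s ≤ 0 → (0:ℝ) < 1 - a * s := by
    intro s hs; nlinarith
  -- antiderivative
  have hanti : ∀ s : ℝ, s ≤ 0 →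
      HasDerivAt (fun s : ℝ => K * (1 - a * s) ^ (-μ)) (C * (1 - a * s) ^ (-μ - 1)) s := by
    intro s hs
    have hb := hbase s hs
    have hlin : HasDerivAt (fun s : ℝ => 1 - a * s) (-a) s := by
      simpa using ((hasDerivAt_id s).const_mul a).const_sub 1
    have := (hlin.rpow_const (p := -μ) (Or.inl (ne_of_gt hb))).const_mul K
    refine this.congr_deriv ?_
    rw [hK_def]
    field_simp
  have key : ∀ u, u ≤ T → ‖p u - pm‖ ≤ K * (1 - a * u) ^ (-μ) := by
    intro u hu
    have hu0 : u < 0 := lt_of_le_of_lt hu hT0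
    have hlim : Filter.Tendsto (fun t => ‖p u - p t‖) Filter.atBot (nhds ‖p u - pm‖) :=
      (tendsto_const_nhds.sub hpt).norm
    refine le_of_tendsto hlim ?_
    filter_upwards [Filter.eventually_le_atBot u] with t ht
    -- fundamental theorem of calculus
    have hint : IntervalIntegrable (fun s => -(gradient V (q s))) MeasureTheory.volume t u :=
      hgc.intervalIntegrable t u
    have hfund : p u - p t = ∫ s in t..u, -(gradient V (q s)) :=
      (intervalIntegral.integral_eq_sub_of_hasDerivAt (fun s _ => hp s) hint).symm
    have hbint : IntervalIntegrable (fun s : ℝ => C * (1 - a * s) ^ (-μ - 1))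
        MeasureTheory.volume t u := by
      apply ContinuousOn.intervalIntegrable
      apply ContinuousOn.mul continuousOn_const
      apply ContinuousOn.rpow_const
      · exact (continuousOn_const.sub (continuousOn_const.mul continuousOn_id))
      · intro s hs
        rw [Set.uIcc_of_le ht] at hs
        exact Or.inl (ne_of_gt (hbase s (le_trans hs.2 (le_of_lt hu0))))
    have hbound : ∀ s ∈ Set.Ioc t u, ‖-(gradient V (q s))‖ ≤ C * (1 - a * s) ^ (-μ - 1) := by
      intro s hs
      have hsT : s ≤ T := le_trans hs.2 hu
      have hsq := (hT s hsT).1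
      have hs0 : s ≤ 0 := le_of_lt (lt_of_le_of_lt hsT hT0)
      rw [norm_neg]
      calc ‖gradient V (q s)‖ ≤ C * (1 + ‖q s‖) ^ (-μ - 1) := hV1 (q s)
        _ ≤ C * (1 - a * s) ^ (-μ - 1) := by
            apply mul_le_mul_of_nonneg_left _ (le_of_lt hC)
            exact Real.rpow_le_rpow_of_nonpos (hbase s hs0) hsq (by linarith)
    have hvalue : (∫ s in t..u, C * (1 - a * s) ^ (-μ - 1))
        = K * (1 - a * u) ^ (-μ) - K * (1 - a * t) ^ (-μ) := by
      apply intervalIntegral.integral_eq_sub_of_hasDerivAt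
      · intro s hs
        rw [Set.uIcc_of_le ht] at hs
        exact hanti s (le_trans hs.2 (le_of_lt hu0))
      · exact hbint
    have hmono : K * (1 - a * t) ^ (-μ) ≤ K * (1 - a * u) ^ (-μ) := by
      apply mul_le_mul_of_nonneg_left _ (le_of_lt hK)
      apply Real.rpow_le_rpow_of_nonpos (hbase u (le_of_lt hu0)) _ (by linarith)
      nlinarith
    have hnn : 0 ≤ K * (1 - a * t) ^ (-μ) :=
      mul_nonneg (le_of_lt hK)
        (Real.rpow_nonneg (le_of_lt (hbase t (le_trans ht (le_of_lt hu0)))) _)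
    calc ‖p u - p t‖ = ‖∫ s in t..u, -(gradient V (q s))‖ := by rw [hfund]
      _ ≤ |∫ s in t..u, C * (1 - a * s) ^ (-μ - 1)| := by
          apply intervalIntegral.norm_integral_le_abs_of_norm_le _ hbint
          rw [MeasureTheory.ae_restrict_iff' measurableSet_uIoc]
          apply Filter.Eventually.of_forall
          intro s hs
          rw [Set.uIoc_of_le ht] at hs
          exact hbound s hs
      _ = K * (1 - a * u) ^ (-μ) - K * (1 - a * t) ^ (-μ) := by
          rw [hvalue, abs_of_nonneg (by linarith)]
      _ ≤ K * (1 - a * u) ^ (-μ) := by linarith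
  -- Step D : t * ‖p t - pm‖ → 0
  have hD : Filter.Tendsto (fun t : ℝ => |t| * ‖p t - pm‖) Filter.atBot (nhds 0) := by
    have h1 : Filter.Tendsto (fun t : ℝ => 1 - a * t) Filter.atBot Filter.atTop := by
      have h0 : Filter.Tendsto (fun t : ℝ => -t) Filter.atBot Filter.atTop :=
        Filter.tendsto_neg_atBot_atTop
      have h0' := h0.const_mul_atTop ha
      exact (Filter.tendsto_atTop_add_const_left Filter.atBot 1 h0').congr fun t => by ring
    have h2 : Filter.Tendsto (fun t : ℝ => (1 - a * t) ^ (-(μ - 1))) Filter.atBot (nhds 0) :=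
      (tendsto_rpow_neg_atTop (by linarith : (0:ℝ) < μ - 1)).comp h1
    have hb : Filter.Tendsto (fun t : ℝ => (K / a) * (1 - a * t) ^ (1 - μ)) Filter.atBot
        (nhds 0) := by
      have := h2.const_mul (K / a)
      simpa [show -(μ - 1) = 1 - μ by ring] using this
    apply squeeze_zero' (Filter.Eventually.of_forall fun t => by positivity) _ hb
    filter_upwards [Filter.eventually_le_atBot T] with t ht
    have ht0 : t < 0 := lt_of_le_of_lt ht hT0
    have hbt := hbase t (le_of_lt ht0)
    have h3 : |t| * ‖p t - pm‖ ≤ |t| * (K * (1 - a * t) ^ (-μ)) :=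
      mul_le_mul_of_nonneg_left (key t ht) (abs_nonneg t)
    have h4 : |t| ≤ (1 - a * t) / a := by
      rw [abs_of_neg ht0, le_div_iff₀ ha]; nlinarith
    have h5 : |t| * (K * (1 - a * t) ^ (-μ)) ≤ ((1 - a * t) / a) * (K * (1 - a * t) ^ (-μ)) :=
      mul_le_mul_of_nonneg_right h4 (by positivity)
    have h6 : ((1 - a * t) / a) * (K * (1 - a * t) ^ (-μ)) = (K / a) * (1 - a * t) ^ (1 - μ) := by
      rw [show (1:ℝ) - μ = -μ + 1 by ring, Real.rpow_add hbt, Real.rpow_one]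
      field_simp
    linarith
  -- Step E : the inner-product correction tends to 0
  have hid : ∀ t : ℝ, (inner ℝ (q t) (p t) : ℝ) - t * ‖pm‖ ^ 2 - (inner ℝ qm pm : ℝ)
      = (inner ℝ (q t - t • pm - qm) (p t) : ℝ) + t * (inner ℝ pm (p t - pm) : ℝ)
        + (inner ℝ qm (p t - pm) : ℝ) := by
    intro t
    simp only [inner_sub_left, inner_sub_right, real_inner_smul_left,
      real_inner_self_eq_norm_sq]
    ring
  have hR : Filter.Tendsto
      (fun t : ℝ => (inner ℝ (q t) (p t) : ℝ) - t * ‖pm‖ ^ 2 - (inner ℝ qm pm : ℝ))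
      Filter.atBot (nhds 0) := by
    have hg : Filter.Tendsto
        (fun t : ℝ => ‖q t - t • pm - qm‖ * ‖p t‖ + ‖pm‖ * (|t| * ‖p t - pm‖)
          + ‖qm‖ * ‖p t - pm‖) Filter.atBot (nhds 0) := by
      have t1 : Filter.Tendsto (fun t : ℝ => ‖q t - t • pm - qm‖ * ‖p t‖) Filter.atBot
          (nhds (0 * ‖pm‖)) := hq_asym.mul hpt.norm
      have t2 := hD.const_mul ‖pm‖
      have t3 := hp_asym.const_mul ‖qm‖
      simpa using (t1.add t2).add t3
    apply squeeze_zero_norm _ hg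
    intro t
    rw [hid t]
    calc |(inner ℝ (q t - t • pm - qm) (p t) : ℝ) + t * (inner ℝ pm (p t - pm) : ℝ)
          + (inner ℝ qm (p t - pm) : ℝ)|
        ≤ |(inner ℝ (q t - t • pm - qm) (p t) : ℝ)| + |t * (inner ℝ pm (p t - pm) : ℝ)|
          + |(inner ℝ qm (p t - pm) : ℝ)| := by
          exact le_trans (abs_add_le _ _) (by gcongr; exact abs_add_le _ _)
      _ ≤ ‖q t - t • pm - qm‖ * ‖p t‖ + ‖pm‖ * (|t| * ‖p t - pm‖)
          + ‖qm‖ * ‖p t - pm‖ := by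
          gcongr
          · exact abs_real_inner_le_norm _ _
          · rw [abs_mul]
            calc |t| * |(inner ℝ pm (p t - pm) : ℝ)| ≤ |t| * (‖pm‖ * ‖p t - pm‖) :=
                  mul_le_mul_of_nonneg_left (abs_real_inner_le_norm _ _) (abs_nonneg t)
              _ = ‖pm‖ * (|t| * ‖p t - pm‖) := by ring
          · exact abs_real_inner_le_norm _ _
  -- conclusion
  have hfin := hS_asym.sub (hR.div_const 2)
  simp only [zero_div, sub_zero] at hfin
  refine hfin.congr fun t => by ring
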